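/- Linear reproduction: for every integer p ≥ 2 and every t ∈ ℝ, one has t = Σ_{k∈ℤ} [ (1/(p−1)) · Σ_{i=1−⌊p/2⌋}^{⌈p/2⌉−1} x_{k+i} ] · φ_k^[p](t), where the outer sum has only finitely many nonzero terms. -/

import Mathlib

/-- B-splines of order `p` on the strictly increasing knot sequence `x : ℤ → ℝ`,
defined by the recursion of Definition 2 of the paper.  `Bspline x p k` is the
B-spline of order `p` (degree `p-1`) associated with the knot `x k`. -/
noncomputable def Bspline (x : ℤ → ℝ) : ℕ → ℤ → ℝ → ℝ
  | 0, _, _ => 0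
  | 1, k, t => if x k ≤ t ∧ t < x (k + 1) then 1 else 0
  | p + 2, k, t =>
      ((t - x (k - ((p + 2) / 2 : ℕ))) /
          (x (k + ((p + 3) / 2 : ℕ) - 1) - x (k - ((p + 2) / 2 : ℕ)))) *
        Bspline x (p + 1) (k - 1 + ((p + 2) % 2 : ℕ)) t +
      ((x (k + ((p + 3) / 2 : ℕ)) - t) /
          (x (k + ((p + 3) / 2 : ℕ)) - x (k - ((p + 2) / 2 : ℕ) + 1))) *
        Bspline x (p + 1) (k + ((p + 2) % 2 : ℕ)) t

/-- linear reproduction: for every `p ≥ 2` and every `t`,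
`t = ∑ₖ [(1/(p-1)) ∑_{i=1-⌊p/2⌋}^{⌈p/2⌉-1} x_{k+i}] φ_k^[p](t)`, the outer sum
having only finitely many nonzero terms. -/
lemma Bspline_eq_zero_of_notin (x : ℤ → ℝ) (hx : Monotone x) :
    ∀ (p : ℕ) (k : ℤ) (t : ℝ),
      (t < x (k - ((p / 2 : ℕ) : ℤ)) ∨ x (k + (((p + 1) / 2 : ℕ) : ℤ)) ≤ t) →
      Bspline x p k t = 0 := by
  intro p
  induction p using Nat.strong_induction_on with
  | _ p ih =>
    match p with
    | 0 => intro k t _; rfl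
    | 1 =>
      intro k t h
      simp only [Bspline, ite_eq_right_iff, one_ne_zero]
      rintro ⟨h1, h2⟩
      rcases h with h | h
      · simp only [Nat.reduceDiv, Nat.cast_zero, sub_zero] at h; linarith
      · norm_num at h; linarith
    | p + 2 =>
      intro k t h
      have h1 : Bspline x (p + 1) (k - 1 + ((p + 2) % 2 : ℕ)) t = 0 := by
        apply ih (p+1) (by omega)
        rcases h with h | h
        · left
          refine lt_of_lt_of_le h (hx ?_)
          omega
        · right
          refine le_trans (hx ?_) h
          omega
      have h2 : Bspline x (p + 1) (k + ((p + 2) % 2 : ℕ)) t = 0 := by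
        apply ih (p+1) (by omega)
        rcases h with h | h
        · left
          refine lt_of_lt_of_le h (hx ?_)
          omega
        · right
          refine le_trans (hx ?_) h
          omega
      rw [Bspline, h1, h2]; ring

lemma Bspline_finite_support (x : ℤ → ℝ) (hx : StrictMono x)
    (htop : Filter.Tendsto x Filter.atTop Filter.atTop)
    (hbot : Filter.Tendsto x Filter.atBot Filter.atBot)
    (p : ℕ) (t : ℝ) : {k : ℤ | Bspline x p k t ≠ 0}.Finite := by
  obtain ⟨N, hN⟩ := (htop.eventually_gt_atTop t).exists_forall_of_atTop
  obtain ⟨M, hM⟩ := (hbot.eventually_lt_atBot t).exists_forall_of_atBot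
  apply Set.Finite.subset (Set.finite_Icc (M - ((p + 1) / 2 : ℕ) + 1) (N + ((p / 2 : ℕ) : ℤ)))
  intro k hk
  simp only [Set.mem_setOf_eq] at hk
  have h := mt (Bspline_eq_zero_of_notin x hx.monotone p k t) hk
  push_neg at h
  obtain ⟨h1, h2⟩ := h
  simp only [Set.mem_Icc]
  constructor
  · by_contra hc
    push_neg at hc
    exact absurd h2 (lt_asymm (hM (k + ((p + 1) / 2 : ℕ)) (by omega)))
  · by_contra hc
    push_neg at hc
    exact absurd h1 (not_le.2 (hN (k - ((p / 2 : ℕ) : ℤ)) (by omega)))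

lemma exists_window (x : ℤ → ℝ)
    (htop : Filter.Tendsto x Filter.atTop Filter.atTop)
    (hbot : Filter.Tendsto x Filter.atBot Filter.atBot)
    (t : ℝ) : ∃ m : ℤ, x m ≤ t ∧ t < x (m + 1) := by
  obtain ⟨N, hN⟩ := (htop.eventually_gt_atTop t).exists_forall_of_atTop
  obtain ⟨M, hM⟩ := (hbot.eventually_lt_atBot t).exists_forall_of_atBot
  obtain ⟨m, hm, hgr⟩ := Int.exists_greatest_of_bdd (P := fun k => x k ≤ t)
    ⟨N, fun z hz => by
      by_contra hc; push_neg at hc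
      exact absurd (hN z (by omega)) (not_lt.2 hz)⟩
    ⟨M, (hM M le_rfl).le⟩
  refine ⟨m, hm, ?_⟩
  by_contra hc
  push_neg at hc
  have := hgr (m + 1) hc
  omega

noncomputable def alphaB (x : ℤ → ℝ) (p : ℕ) (t : ℝ) (k : ℤ) : ℝ :=
  (t - x (k - ((p + 2) / 2 : ℕ))) /
    (x (k + ((p + 3) / 2 : ℕ) - 1) - x (k - ((p + 2) / 2 : ℕ)))

noncomputable def betaB (x : ℤ → ℝ) (p : ℕ) (t : ℝ) (k : ℤ) : ℝ :=
  (x (k + ((p + 3) / 2 : ℕ)) - t) /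
    (x (k + ((p + 3) / 2 : ℕ)) - x (k - ((p + 2) / 2 : ℕ) + 1))

lemma Bspline_collect (x : ℤ → ℝ) (hx : StrictMono x)
    (htop : Filter.Tendsto x Filter.atTop Filter.atTop)
    (hbot : Filter.Tendsto x Filter.atBot Filter.atBot)
    (p : ℕ) (t : ℝ) (a : ℤ → ℝ) :
    ∑ᶠ k : ℤ, a k * Bspline x (p + 2) k t =
      ∑ᶠ j : ℤ,
        (a (j + 1 - ((p + 2) % 2 : ℕ)) * alphaB x p t (j + 1 - ((p + 2) % 2 : ℕ)) +
          a (j - ((p + 2) % 2 : ℕ)) * betaB x p t (j - ((p + 2) % 2 : ℕ))) *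
          Bspline x (p + 1) j t := by
  classical
  set r : ℤ := (((p + 2) % 2 : ℕ) : ℤ) with hr
  set A : ℤ → ℝ := alphaB x p t with hA
  set B : ℤ → ℝ := betaB x p t with hB
  have hF : {j : ℤ | Bspline x (p + 1) j t ≠ 0}.Finite :=
    Bspline_finite_support x hx htop hbot (p + 1) t
  have hsupp1 : (Function.support fun k : ℤ =>
      a k * A k * Bspline x (p + 1) (k - 1 + r) t).Finite := by
    apply Set.Finite.subset ((hF.image (fun j => j + 1 - r)))
    intro k hk
    simp only [Function.mem_support] at hk
    exact ⟨k - 1 + r, fun h => hk (by simp [h]), by ring⟩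
  have hsupp2 : (Function.support fun k : ℤ =>
      a k * B k * Bspline x (p + 1) (k + r) t).Finite := by
    apply Set.Finite.subset ((hF.image (fun j => j - r)))
    intro k hk
    simp only [Function.mem_support] at hk
    exact ⟨k + r, fun h => hk (by simp [h]), by ring⟩
  calc ∑ᶠ k : ℤ, a k * Bspline x (p + 2) k t
      = ∑ᶠ k : ℤ, (a k * A k * Bspline x (p + 1) (k - 1 + r) t +
          a k * B k * Bspline x (p + 1) (k + r) t) := by
        apply finsum_congr
        intro k
        rw [Bspline]
        simp only [hA, hB, alphaB, betaB]
        ring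
    _ = (∑ᶠ k : ℤ, a k * A k * Bspline x (p + 1) (k - 1 + r) t) +
        ∑ᶠ k : ℤ, a k * B k * Bspline x (p + 1) (k + r) t :=
        finsum_add_distrib hsupp1 hsupp2
    _ = (∑ᶠ j : ℤ, a (j + 1 - r) * A (j + 1 - r) * Bspline x (p + 1) j t) +
        ∑ᶠ j : ℤ, a (j - r) * B (j - r) * Bspline x (p + 1) j t := by
        congr 1
        · rw [← finsum_comp_equiv (Equiv.addRight (1 - r))
            (f := fun k => a k * A k * Bspline x (p + 1) (k - 1 + r) t)]
          apply finsum_congr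
          intro j
          have : (Equiv.addRight (1 - r)) j = j + 1 - r := by
            simp [Equiv.addRight]; ring
          rw [this]
          congr 2
          omega
        · rw [← finsum_comp_equiv (Equiv.addRight (-r))
            (f := fun k => a k * B k * Bspline x (p + 1) (k + r) t)]
          apply finsum_congr
          intro j
          have : (Equiv.addRight (-r)) j = j - r := by
            simp [Equiv.addRight]; ring
          rw [this]
          congr 2
          omega
    _ = ∑ᶠ j : ℤ, (a (j + 1 - r) * A (j + 1 - r) + a (j - r) * B (j - r)) *
          Bspline x (p + 1) j t := by
        rw [← finsum_add_distrib]
        · apply finsum_congr; intro j; ring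
        · apply Set.Finite.subset hF
          intro j hj
          simp only [Function.mem_support] at hj
          intro h; exact hj (by simp [h])
        · apply Set.Finite.subset hF
          intro j hj
          simp only [Function.mem_support] at hj
          intro h; exact hj (by simp [h])

noncomputable def csum (x : ℤ → ℝ) (p : ℕ) (k : ℤ) : ℝ :=
  ∑ i ∈ Finset.Icc (1 - ((p / 2 : ℕ) : ℤ)) (((p + 1) / 2 : ℕ) - 1), x (k + i)

lemma csum_eq (x : ℤ → ℝ) (p : ℕ) (k : ℤ) :
    csum x p k =
      ∑ n ∈ Finset.Icc (k + (1 - ((p / 2 : ℕ) : ℤ))) (k + ((((p + 1) / 2 : ℕ) : ℤ) - 1)), x n := by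
  rw [csum, ← Finset.map_add_left_Icc, Finset.sum_map]
  rfl

lemma coef_partition (x : ℤ → ℝ) (hx : StrictMono x) (p : ℕ) (t : ℝ) (j : ℤ) :
    alphaB x p t (j + 1 - ((p + 2) % 2 : ℕ)) + betaB x p t (j - ((p + 2) % 2 : ℕ)) = 1 := by
  set L : ℤ := j - (((p + 1) / 2 : ℕ) : ℤ) with hL
  have e1 : j + 1 - ((p + 2) % 2 : ℕ) - ((p + 2) / 2 : ℕ) = L := by omega
  have e2 : j + 1 - ((p + 2) % 2 : ℕ) + ((p + 3) / 2 : ℕ) - 1 = L + p + 1 := by omega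
  have e3 : j - ((p + 2) % 2 : ℕ) + ((p + 3) / 2 : ℕ) = L + p + 1 := by omega
  have e4 : j - ((p + 2) % 2 : ℕ) - ((p + 2) / 2 : ℕ) + 1 = L := by omega
  rw [alphaB, betaB, e1, e2, e3, e4]
  have hD : x L < x (L + p + 1) := hx (by omega)
  have : t - x L + (x (L + p + 1) - t) = x (L + p + 1) - x L := by ring
  rw [← add_div, this, div_self (by linarith : x (L + p + 1) - x L ≠ 0)]

lemma coef_linear (x : ℤ → ℝ) (hx : StrictMono x) (p : ℕ) (t : ℝ) (j : ℤ) :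
    csum x (p + 2) (j + 1 - ((p + 2) % 2 : ℕ)) * alphaB x p t (j + 1 - ((p + 2) % 2 : ℕ)) +
      csum x (p + 2) (j - ((p + 2) % 2 : ℕ)) * betaB x p t (j - ((p + 2) % 2 : ℕ)) =
      csum x (p + 1) j + t := by
  set L : ℤ := j - (((p + 1) / 2 : ℕ) : ℤ) with hL
  have e1 : j + 1 - ((p + 2) % 2 : ℕ) - ((p + 2) / 2 : ℕ) = L := by omega
  have e2 : j + 1 - ((p + 2) % 2 : ℕ) + ((p + 3) / 2 : ℕ) - 1 = L + p + 1 := by omega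
  have e3 : j - ((p + 2) % 2 : ℕ) + ((p + 3) / 2 : ℕ) = L + p + 1 := by omega
  have e4 : j - ((p + 2) % 2 : ℕ) - ((p + 2) / 2 : ℕ) + 1 = L := by omega
  have hi1 : Finset.Icc (L + 1) (L + p + 1) =
      insert (L + p + 1) (Finset.Icc (L + 1) (L + p)) := by
    ext n; simp only [Finset.mem_Icc, Finset.mem_insert]; omega
  have hi2 : Finset.Icc L (L + p) = insert L (Finset.Icc (L + 1) (L + p)) := by
    ext n; simp only [Finset.mem_Icc, Finset.mem_insert]; omega
  have hs1 : csum x (p + 2) (j + 1 - ((p + 2) % 2 : ℕ)) =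
      (∑ n ∈ Finset.Icc (L + 1) (L + p), x n) + x (L + p + 1) := by
    rw [csum_eq]
    have hb1 : j + 1 - ((p + 2) % 2 : ℕ) + (1 - (((p + 2) / 2 : ℕ) : ℤ)) = L + 1 := by omega
    have hb2 : j + 1 - ((p + 2) % 2 : ℕ) + (((((p + 2) + 1) / 2 : ℕ) : ℤ) - 1) = L + p + 1 := by
      omega
    rw [hb1, hb2, hi1, Finset.sum_insert (by simp only [Finset.mem_Icc]; omega)]
    ring
  have hs2 : csum x (p + 2) (j - ((p + 2) % 2 : ℕ)) =
      x L + ∑ n ∈ Finset.Icc (L + 1) (L + p), x n := by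
    rw [csum_eq]
    have hb1 : j - ((p + 2) % 2 : ℕ) + (1 - (((p + 2) / 2 : ℕ) : ℤ)) = L := by omega
    have hb2 : j - ((p + 2) % 2 : ℕ) + (((((p + 2) + 1) / 2 : ℕ) : ℤ) - 1) = L + p := by omega
    rw [hb1, hb2, hi2, Finset.sum_insert (by simp only [Finset.mem_Icc]; omega)]
  have hs3 : csum x (p + 1) j = ∑ n ∈ Finset.Icc (L + 1) (L + p), x n := by
    rw [csum_eq]
    have hb1 : j + (1 - ((((p + 1) / 2 : ℕ)) : ℤ)) = L + 1 := by omega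
    have hb2 : j + (((((p + 1) + 1) / 2 : ℕ) : ℤ) - 1) = L + p := by omega
    rw [hb1, hb2]
  rw [hs1, hs2, hs3, alphaB, betaB, e1, e2, e3, e4]
  have hD : x L < x (L + p + 1) := hx (by omega)
  have hD' : x (L + p + 1) - x L ≠ 0 := by linarith
  field_simp
  ring

lemma Bspline_partition (x : ℤ → ℝ) (hx : StrictMono x)
    (htop : Filter.Tendsto x Filter.atTop Filter.atTop)
    (hbot : Filter.Tendsto x Filter.atBot Filter.atBot)
    (p : ℕ) (t : ℝ) : ∑ᶠ k : ℤ, Bspline x (p + 1) k t = 1 := by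
  induction p with
  | zero =>
    obtain ⟨m, hm1, hm2⟩ := exists_window x htop hbot t
    rw [finsum_eq_single (fun k => Bspline x 1 k t) m]
    · simp only [Bspline]
      rw [if_pos ⟨hm1, hm2⟩]
    · intro k hk
      simp only [Bspline, ite_eq_right_iff, one_ne_zero]
      rintro ⟨h1, h2⟩
      rcases lt_or_gt_of_ne hk with h | h
      · have : x (k + 1) ≤ x m := hx.monotone (by omega)
        linarith
      · have : x (m + 1) ≤ x k := hx.monotone (by omega)
        linarith
  | succ p ih =>
    have h0 : ∑ᶠ k : ℤ, Bspline x (p + 2) k t =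
        ∑ᶠ k : ℤ, (fun _ : ℤ => (1 : ℝ)) k * Bspline x (p + 2) k t := by
      apply finsum_congr; intro k; rw [one_mul]
    rw [h0, Bspline_collect x hx htop hbot p t (fun _ => 1)]
    calc ∑ᶠ j : ℤ, ((fun _ : ℤ => (1:ℝ)) (j + 1 - ((p + 2) % 2 : ℕ)) *
            alphaB x p t (j + 1 - ((p + 2) % 2 : ℕ)) +
            (fun _ : ℤ => (1:ℝ)) (j - ((p + 2) % 2 : ℕ)) *
            betaB x p t (j - ((p + 2) % 2 : ℕ))) * Bspline x (p + 1) j t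
        = ∑ᶠ j : ℤ, Bspline x (p + 1) j t := by
          apply finsum_congr; intro j
          rw [one_mul, one_mul, coef_partition x hx p t j, one_mul]
      _ = 1 := ih

lemma Bspline_linear (x : ℤ → ℝ) (hx : StrictMono x)
    (htop : Filter.Tendsto x Filter.atTop Filter.atTop)
    (hbot : Filter.Tendsto x Filter.atBot Filter.atBot)
    (p : ℕ) (t : ℝ) :
    ∑ᶠ k : ℤ, csum x (p + 1) k * Bspline x (p + 1) k t = p * t := by
  induction p with
  | zero =>
    have : ∀ k : ℤ, csum x 1 k = 0 := by
      intro k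
      rw [csum]
      norm_num
    simp only [this, zero_mul, finsum_zero, Nat.cast_zero]
  | succ p ih =>
    rw [Bspline_collect x hx htop hbot p t (csum x (p + 2))]
    have hF : {j : ℤ | Bspline x (p + 1) j t ≠ 0}.Finite :=
      Bspline_finite_support x hx htop hbot (p + 1) t
    calc ∑ᶠ j : ℤ, (csum x (p + 2) (j + 1 - ((p + 2) % 2 : ℕ)) *
            alphaB x p t (j + 1 - ((p + 2) % 2 : ℕ)) +
            csum x (p + 2) (j - ((p + 2) % 2 : ℕ)) *
            betaB x p t (j - ((p + 2) % 2 : ℕ))) * Bspline x (p + 1) j t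
        = ∑ᶠ j : ℤ, (csum x (p + 1) j * Bspline x (p + 1) j t +
            t * Bspline x (p + 1) j t) := by
          apply finsum_congr; intro j
          rw [coef_linear x hx p t j]
          ring
      _ = (∑ᶠ j : ℤ, csum x (p + 1) j * Bspline x (p + 1) j t) +
          ∑ᶠ j : ℤ, t * Bspline x (p + 1) j t := by
          apply finsum_add_distrib
          · apply Set.Finite.subset hF
            intro j hj
            simp only [Function.mem_support] at hj
            intro h; exact hj (by simp [h])
          · apply Set.Finite.subset hF
            intro j hj
            simp only [Function.mem_support] at hj
            intro h; exact hj (by simp [h])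
      _ = p * t + t * ∑ᶠ j : ℤ, Bspline x (p + 1) j t := by
          rw [ih, mul_finsum' _ _ (Set.Finite.subset hF (fun j hj => hj))]
      _ = (p + 1 : ℕ) * t := by
          rw [Bspline_partition x hx htop hbot p t]
          push_cast
          ring

theorem bspline_reproduces_identity
    (x : ℤ → ℝ) (hx : StrictMono x)
    (htop : Filter.Tendsto x Filter.atTop Filter.atTop)
    (hbot : Filter.Tendsto x Filter.atBot Filter.atBot)
    (p : ℕ) (hp : 2 ≤ p) (t : ℝ) :
    {k : ℤ | ((1 / ((p : ℝ) - 1)) *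
        ∑ i ∈ Finset.Icc (1 - ((p / 2 : ℕ) : ℤ)) (((p + 1) / 2 : ℕ) - 1), x (k + i)) *
        Bspline x p k t ≠ 0}.Finite ∧
    t = ∑ᶠ k : ℤ, ((1 / ((p : ℝ) - 1)) *
        ∑ i ∈ Finset.Icc (1 - ((p / 2 : ℕ) : ℤ)) (((p + 1) / 2 : ℕ) - 1), x (k + i)) *
        Bspline x p k t := by
  have hF : {k : ℤ | Bspline x p k t ≠ 0}.Finite :=
    Bspline_finite_support x hx htop hbot p t
  constructor
  · apply Set.Finite.subset hF
    intro k hk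
    simp only [Set.mem_setOf_eq] at hk ⊢
    intro h; exact hk (by rw [h, mul_zero])
  · obtain ⟨n, rfl⟩ : ∃ n, p = n + 2 := ⟨p - 2, by omega⟩
    have hlin := Bspline_linear x hx htop hbot (n + 1) t
    have hcast : ((n + 2 : ℕ) : ℝ) - 1 = ((n + 1 : ℕ) : ℝ) := by push_cast; ring
    have hne : ((n + 1 : ℕ) : ℝ) ≠ 0 := by positivity
    calc t = (1 / ((n + 1 : ℕ) : ℝ)) * (((n + 1 : ℕ) : ℝ) * t) := by
            field_simp
      _ = (1 / ((n + 1 : ℕ) : ℝ)) *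
            ∑ᶠ k : ℤ, csum x (n + 2) k * Bspline x (n + 2) k t := by rw [hlin]
      _ = ∑ᶠ k : ℤ, (1 / ((n + 1 : ℕ) : ℝ)) * (csum x (n + 2) k * Bspline x (n + 2) k t) := by
            apply mul_finsum'
            apply Set.Finite.subset hF
            intro k hk
            simp only [Function.mem_support] at hk
            intro h; exact hk (by simp [h])
      _ = ∑ᶠ k : ℤ, ((1 / (((n + 2 : ℕ) : ℝ) - 1)) * csum x (n + 2) k) *
            Bspline x (n + 2) k t := by
            apply finsum_congr; intro k
            rw [hcast]
            ring
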